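/- arXiv:cond-mat/0411699 — 4 statements merged into one kernel-verified Lean document; each statement's English description precedes it below -/
import Mathlib

section
/- For integers 0 ≤ k ≤ n and p ∈ [0,1], the binomial tail probability ∑_{i=0}^k C(n,i) p^i (1-p)^{n-i} equals (∫_p^1 t^k (1-t)^{n-k-1} dt) / (∫_0^1 t^k (1-t)^{n-k-1} dt), i.e., the probability that a Beta(k+1, n-k) random variable exceeds p. -/
open intervalIntegral Finset

private lemma binom_key (n k : ℕ) (hk : k < n) (p : ℝ) :
    ∑ i ∈ Finset.range (k + 1), (n.choose i : ℝ) * p ^ i * (1 - p) ^ (n - i)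
      = ((n.choose (k+1) * (k+1) : ℕ) : ℝ) *
        ∫ t in p..1, t ^ k * (1 - t) ^ (n - k - 1) := by
  set c : ℝ := ((n.choose (k+1) * (k+1) : ℕ) : ℝ) with hc
  set g : ℕ → ℝ → ℝ := fun i q => ((n.choose i * i : ℕ) : ℝ) * q ^ (i-1) * (1-q) ^ (n-i)
    with hg
  set F : ℝ → ℝ := fun q =>
    (∑ i ∈ Finset.range (k + 1), (n.choose i : ℝ) * q ^ i * (1 - q) ^ (n - i))
      - c * ∫ t in q..1, t ^ k * (1 - t) ^ (n - k - 1) with hF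
  have cont : Continuous fun t : ℝ => t ^ k * (1 - t) ^ (n - k - 1) := by fun_prop
  have hGd : ∀ q : ℝ, HasDerivAt (fun q => ∫ t in q..1, t ^ k * (1 - t) ^ (n - k - 1))
      (-(q ^ k * (1 - q) ^ (n - k - 1))) q := by
    intro q
    exact integral_hasDerivAt_left (cont.intervalIntegrable _ _)
      (cont.stronglyMeasurableAtFilter _ _) cont.continuousAt
  have hSd : ∀ q : ℝ, HasDerivAt (fun q =>
      ∑ i ∈ Finset.range (k + 1), (n.choose i : ℝ) * q ^ i * (1 - q) ^ (n - i))
      (∑ i ∈ Finset.range (k + 1), (g i q - g (i+1) q)) q := by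
    intro q
    apply HasDerivAt.fun_sum
    intro i hi
    have hin : i < n := lt_of_lt_of_le (Finset.mem_range.mp hi) hk
    have h1 : HasDerivAt (fun q : ℝ => q ^ i) ((i : ℝ) * q ^ (i-1)) q := hasDerivAt_pow i q
    have h2 : HasDerivAt (fun q : ℝ => (1-q) ^ (n-i))
        (((n-i : ℕ) : ℝ) * (1-q) ^ (n-i-1) * (-1)) q := by
      exact (hasDerivAt_pow (n-i) (1-q)).comp q
        (((hasDerivAt_id q).const_sub 1).congr_deriv (by ring))
    have hch : ((n.choose (i+1) * (i+1) : ℕ) : ℝ) = ((n.choose i * (n - i) : ℕ) : ℝ) := by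
      rw [Nat.choose_succ_right_eq]
    have hexp : n - (i+1) = n - i - 1 := by omega
    refine HasDerivAt.congr_deriv ((h1.const_mul ((n.choose i : ℝ))).mul h2) ?_
    simp only [hg, hexp, hch]
    push_cast [Nat.cast_sub hin.le]
    ring
  have hFd : ∀ q : ℝ, HasDerivAt F 0 q := by
    intro q
    have := (hSd q).sub ((hGd q).const_mul c)
    refine HasDerivAt.congr_deriv this ?_
    rw [Finset.sum_range_sub' (fun i => g i q) (k+1)]
    have hexp : n - (k+1) = n - k - 1 := by omega
    simp only [hg, hexp, hc]
    push_cast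
    ring
  have hconst : ∀ q : ℝ, F q = F 1 :=
    fun q => is_const_of_deriv_eq_zero (fun x => (hFd x).differentiableAt)
      (fun x => (hFd x).deriv) q 1
  have hF1 : F 1 = 0 := by
    have hz : ∀ i ∈ Finset.range (k+1), (n.choose i : ℝ) * (1:ℝ) ^ i * (1 - 1) ^ (n - i) = 0 := by
      intro i hi
      have : n - i ≠ 0 := by
        have := Finset.mem_range.mp hi; omega
      simp [this]
    simp only [hF, intervalIntegral.integral_same, mul_zero, sub_zero]
    rw [Finset.sum_congr rfl hz]
    simp
  have := (hconst p).trans hF1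
  simpa [hF, sub_eq_zero] using this

theorem binomial_tail_eq_beta_tail (n k : ℕ) (hk : k < n) (p : ℝ)
    (hp : p ∈ Set.Icc (0:ℝ) 1) :
    ∑ i ∈ Finset.range (k + 1), (n.choose i : ℝ) * p ^ i * (1 - p) ^ (n - i)
      = (∫ t in p..1, t ^ k * (1 - t) ^ (n - k - 1)) /
        (∫ t in (0:ℝ)..1, t ^ k * (1 - t) ^ (n - k - 1)) := by
  have hp' := binom_key n k hk p
  have h0 := binom_key n k hk 0
  have hs0 : ∑ i ∈ Finset.range (k + 1), (n.choose i : ℝ) * (0:ℝ) ^ i * (1 - 0) ^ (n - i) = 1 := by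
    rw [Finset.sum_range_succ']
    simp
  rw [hs0] at h0
  have hcnz : ((n.choose (k+1) * (k+1) : ℕ) : ℝ) ≠ 0 := by
    have h1 : 0 < n.choose (k+1) := Nat.choose_pos hk
    positivity
  have hI0 : (∫ t in (0:ℝ)..1, t ^ k * (1 - t) ^ (n - k - 1))
      = 1 / ((n.choose (k+1) * (k+1) : ℕ) : ℝ) := by
    rw [eq_div_iff hcnz]
    linarith
  rw [hp', hI0]
  field_simp
end

section
/- For integers 0 ≤ k < n and any v ∈ (0,1), the equation ∑_{i=0}^k C(n,i) p^i (1-p)^{n-i} = v has exactly one solution p = p(v) in (0,1), and this solution satisfies 1 - v^{1/n} ≤ p(v) ≤ (1-v)^{1/n}. -/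
private lemma tail_hasDerivAt (n k : ℕ) (hk : k < n) (p : ℝ) :
    HasDerivAt (fun p : ℝ => ∑ i ∈ Finset.range (k + 1),
        (n.choose i : ℝ) * p ^ i * (1 - p) ^ (n - i))
      (-((((k+1) * n.choose (k+1) : ℕ) : ℝ) * p ^ k * (1 - p) ^ (n - (k+1)))) p := by
  have H : ∀ i ∈ Finset.range (k+1),
      HasDerivAt (fun p : ℝ => (n.choose i : ℝ) * p ^ i * (1 - p) ^ (n - i))
        ((((i * n.choose i : ℕ) : ℝ) * p^(i-1) * (1-p)^(n-i))
          - (((i+1) * n.choose (i+1) : ℕ) : ℝ) * p^i * (1-p)^(n-(i+1))) p := by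
    intro i hi
    have hi' : i < n := lt_of_lt_of_le (Finset.mem_range.mp hi) hk
    have h1 : HasDerivAt (fun p:ℝ => (n.choose i : ℝ) * p^i)
        ((n.choose i : ℝ) * (i * p^(i-1))) p := (hasDerivAt_pow i p).const_mul _
    have h2 : HasDerivAt (fun p:ℝ => (1-p)^(n-i))
        (((n-i : ℕ) : ℝ) * (1-p)^(n-i-1) * (-1)) p := by
      exact HasDerivAt.comp p (hasDerivAt_pow (n-i) (1-p))
        (((hasDerivAt_id p).const_sub 1))
    have h3 := h1.mul h2
    refine h3.congr_deriv ?_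
    have hch : (((i+1) * n.choose (i+1) : ℕ) : ℝ) = ((n.choose i * (n - i) : ℕ) : ℝ) := by
      rw [Nat.mul_comm, Nat.choose_succ_right_eq]
    rw [hch]
    have hsub : n - (i+1) = n - i - 1 := by omega
    rw [hsub]
    push_cast [Nat.cast_sub hi'.le]
    ring
  have hs := HasDerivAt.fun_sum H
  refine hs.congr_deriv ?_
  have h := Finset.sum_range_sub'
    (fun i => (((i * n.choose i : ℕ) : ℝ) * p^(i-1) * (1-p)^(n-i))) (k+1)
  simp only [Nat.add_sub_cancel] at h
  rw [h]
  simp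

private lemma tail_strictAntiOn (n k : ℕ) (hk : k < n) :
    StrictAntiOn (fun p : ℝ => ∑ i ∈ Finset.range (k + 1),
        (n.choose i : ℝ) * p ^ i * (1 - p) ^ (n - i)) (Set.Icc 0 1) := by
  apply strictAntiOn_of_deriv_neg (convex_Icc 0 1)
  · exact Continuous.continuousOn (by continuity)
  · intro x hx
    rw [interior_Icc] at hx
    rw [(tail_hasDerivAt n k hk x).deriv]
    have hc : 0 < (((k+1) * n.choose (k+1) : ℕ) : ℝ) := by
      have := Nat.choose_pos (by omega : k + 1 ≤ n)
      positivity
    have hxk : 0 < x ^ k := pow_pos hx.1 k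
    have h1x : 0 < (1 - x) ^ (n - (k+1)) := pow_pos (by linarith [hx.2]) _
    have := mul_pos (mul_pos hc hxk) h1x
    linarith

theorem binomial_tail_unique_solution (n k : ℕ) (hk : k < n) (v : ℝ)
    (hv : v ∈ Set.Ioo (0:ℝ) 1) :
    (∃! p : ℝ, p ∈ Set.Ioo (0:ℝ) 1 ∧
        ∑ i ∈ Finset.range (k + 1), (n.choose i : ℝ) * p ^ i * (1 - p) ^ (n - i) = v)
    ∧ ∀ p ∈ Set.Ioo (0:ℝ) 1,
        (∑ i ∈ Finset.range (k + 1), (n.choose i : ℝ) * p ^ i * (1 - p) ^ (n - i) = v) →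
        1 - v ^ ((1:ℝ)/n) ≤ p ∧ p ≤ (1 - v) ^ ((1:ℝ)/n) := by
  set f : ℝ → ℝ := fun p => ∑ i ∈ Finset.range (k + 1),
      (n.choose i : ℝ) * p ^ i * (1 - p) ^ (n - i) with hf
  have hn : 0 < n := by omega
  have hf0 : f 0 = 1 := by
    show (∑ i ∈ Finset.range (k + 1), (n.choose i : ℝ) * (0:ℝ) ^ i * (1 - 0) ^ (n - i)) = 1
    rw [Finset.sum_eq_single 0]
    · simp
    · intro i hi hne
      simp [zero_pow hne]
    · simp
  have hf1 : f 1 = 0 := by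
    show (∑ i ∈ Finset.range (k + 1), (n.choose i : ℝ) * (1:ℝ) ^ i * (1 - 1) ^ (n - i)) = 0
    apply Finset.sum_eq_zero
    intro i hi
    have hni : n - i ≠ 0 := by
      have := Finset.mem_range.mp hi; omega
    simp [zero_pow hni]
  have hanti := tail_strictAntiOn n k hk
  have hcont : Continuous f := by rw [hf]; continuity
  constructor
  · have hiv : Set.Ioo (f 1) (f 0) ⊆ f '' Set.Ioo 0 1 :=
      intermediate_value_Ioo' (by norm_num) hcont.continuousOn
    rw [hf0, hf1] at hiv
    obtain ⟨p, hp, hpv⟩ := hiv hv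
    refine ⟨p, ⟨hp, hpv⟩, ?_⟩
    rintro q ⟨hq, hqv⟩
    exact hanti.injOn (Set.mem_Icc_of_Ioo hq) (Set.mem_Icc_of_Ioo hp)
      (hqv.trans hpv.symm)
  · rintro p ⟨hp0, hp1⟩ hpv
    have h1p : (0:ℝ) ≤ 1 - p := by linarith
    have hterms : ∀ i, 0 ≤ (n.choose i : ℝ) * p ^ i * (1 - p) ^ (n - i) := by
      intro i; positivity
    have hlow : (1 - p) ^ n ≤ v := by
      rw [← hpv]
      have := Finset.single_le_sum (f := fun i => (n.choose i : ℝ) * p ^ i * (1 - p) ^ (n - i))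
        (fun i _ => hterms i) (Finset.mem_range.mpr (Nat.succ_pos k))
      simpa using this
    have htot : ∑ i ∈ Finset.range (n + 1), (n.choose i : ℝ) * p ^ i * (1 - p) ^ (n - i) = 1 := by
      have h := add_pow p (1 - p) n
      simp only [add_sub_cancel, one_pow] at h
      have h2 : ∑ i ∈ Finset.range (n+1), (n.choose i:ℝ) * p^i * (1-p)^(n-i)
          = ∑ m ∈ Finset.range (n+1), p^m * (1-p)^(n-m) * (n.choose m:ℝ) :=
        Finset.sum_congr rfl (fun i _ => by ring)
      rw [h2, ← h]
    have hsplit : ∑ i ∈ Finset.range (n + 1), (n.choose i : ℝ) * p ^ i * (1 - p) ^ (n - i)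
        = (∑ i ∈ Finset.range (k + 1), (n.choose i : ℝ) * p ^ i * (1 - p) ^ (n - i))
          + ∑ i ∈ Finset.Ico (k + 1) (n + 1), (n.choose i : ℝ) * p ^ i * (1 - p) ^ (n - i) := by
      rw [Finset.sum_range_add_sum_Ico _ (by omega : k + 1 ≤ n + 1)]
    have hhigh : p ^ n ≤ 1 - v := by
      have hmem : n ∈ Finset.Ico (k + 1) (n + 1) := by
        simp [Finset.mem_Ico]; omega
      have hsingle := Finset.single_le_sum
        (f := fun i => (n.choose i : ℝ) * p ^ i * (1 - p) ^ (n - i))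
        (fun i _ => hterms i) hmem
      simp only [Nat.choose_self, Nat.cast_one, Nat.sub_self, pow_zero, one_mul, mul_one] at hsingle
      linarith
    refine ⟨?_, ?_⟩
    · have h := Real.rpow_le_rpow (by positivity) hlow (by positivity : (0:ℝ) ≤ 1/n)
      rw [← Real.rpow_natCast (1-p) n, ← Real.rpow_mul h1p] at h
      rw [mul_one_div_cancel (by exact_mod_cast hn.ne' : (n:ℝ) ≠ 0), Real.rpow_one] at h
      linarith
    · have h := Real.rpow_le_rpow (by positivity) hhigh (by positivity : (0:ℝ) ≤ 1/n)
      rw [← Real.rpow_natCast p n, ← Real.rpow_mul hp0.le] at h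
      rwa [mul_one_div_cancel (by exact_mod_cast hn.ne' : (n:ℝ) ≠ 0), Real.rpow_one] at h
end

section
/- Fix ρ ∈ (0,1), a positive integer n, and v ∈ (0,1). Define F_ρ(p,y) = Φ((Φ^{-1}(p) + √ρ · y)/√(1-ρ)) where Φ is the standard normal CDF. Then the equation v = ∫_{-∞}^{∞} φ(y) (1 - F_ρ(p,y))^n dy (with φ the standard normal density) has exactly one solution p = p(v) ∈ (0,1), and this solution satisfies p(v) ≥ 1 - v^{1/n}. -/
open MeasureTheory Real Set Filter Topology
open scoped ENNReal NNReal
noncomputable def stdNormalPdf (y : ℝ) : ℝ := Real.exp (-y ^ 2 / 2) / Real.sqrt (2 * Real.pi)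
noncomputable def stdNormalCdf (x : ℝ) : ℝ := ∫ y in Set.Iic x, stdNormalPdf y
noncomputable def stdNormalInv : ℝ → ℝ := Function.invFun stdNormalCdf

noncomputable def vasicekF (ρ p y : ℝ) : ℝ :=
  stdNormalCdf ((stdNormalInv p + Real.sqrt ρ * y) / Real.sqrt (1 - ρ))

lemma pdf_pos (y : ℝ) : 0 < stdNormalPdf y := by unfold stdNormalPdf; positivity
lemma pdf_cont : Continuous stdNormalPdf := by unfold stdNormalPdf; fun_prop
lemma pdf_integrable : Integrable stdNormalPdf := by
  unfold stdNormalPdf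
  have : Integrable (fun y : ℝ => Real.exp (-(1/2) * y^2)) := integrable_exp_neg_mul_sq (by norm_num)
  have h2 : ∀ y : ℝ, Real.exp (-y^2/2) / Real.sqrt (2*Real.pi)
      = Real.exp (-(1/2)*y^2) * (Real.sqrt (2*Real.pi))⁻¹ := by
    intro y; rw [div_eq_mul_inv]; congr 2; ring
  simp_rw [h2]
  exact this.mul_const _

lemma pdf_integral : ∫ y : ℝ, stdNormalPdf y = 1 := by
  unfold stdNormalPdf
  rw [integral_div]
  have h2 : ∀ y : ℝ, Real.exp (-y^2/2) = Real.exp (-(1/2) * y^2) := by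
    intro y; congr 1; ring
  simp_rw [h2]
  rw [integral_gaussian (1/2 : ℝ)]
  rw [div_eq_one_iff_eq (by positivity)]
  congr 1; ring

lemma cdf_sub (a b : ℝ) : stdNormalCdf b - stdNormalCdf a = ∫ y in a..b, stdNormalPdf y :=
  intervalIntegral.integral_Iic_sub_Iic pdf_integrable.integrableOn pdf_integrable.integrableOn

lemma cdf_strictMono : StrictMono stdNormalCdf := by
  intro a b hab
  have h := cdf_sub a b
  have hpos : 0 < ∫ y in a..b, stdNormalPdf y :=
    intervalIntegral.intervalIntegral_pos_of_pos (pdf_integrable.intervalIntegrable) pdf_pos hab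
  linarith

lemma cdf_hasDerivAt (x : ℝ) : HasDerivAt stdNormalCdf (stdNormalPdf x) x := by
  have : ∀ u : ℝ, stdNormalCdf u = stdNormalCdf 0 + ∫ y in (0:ℝ)..u, stdNormalPdf y := by
    intro u; have := cdf_sub 0 u; linarith
  rw [show stdNormalCdf = fun u => stdNormalCdf 0 + ∫ y in (0:ℝ)..u, stdNormalPdf y from funext this]
  exact (intervalIntegral.integral_hasDerivAt_right (pdf_integrable.intervalIntegrable)
    (pdf_cont.stronglyMeasurableAtFilter _ _) pdf_cont.continuousAt).const_add _

lemma cdf_cont : Continuous stdNormalCdf :=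
  continuous_iff_continuousAt.2 fun x => (cdf_hasDerivAt x).continuousAt

lemma cdf_eq_indicator (x : ℝ) : stdNormalCdf x = ∫ y : ℝ, (Set.Iic x).indicator stdNormalPdf y := by
  rw [integral_indicator measurableSet_Iic]; rfl

lemma cdf_tendsto_atTop : Tendsto stdNormalCdf atTop (𝓝 1) := by
  rw [← pdf_integral]
  apply Tendsto.congr (fun x => (cdf_eq_indicator x).symm)
  apply tendsto_integral_filter_of_dominated_convergence stdNormalPdf
  · filter_upwards with x
    exact (pdf_cont.stronglyMeasurable.indicator measurableSet_Iic).aestronglyMeasurable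
  · filter_upwards with x
    filter_upwards with y
    rw [Real.norm_eq_abs, abs_of_nonneg (Set.indicator_nonneg (fun z _ => (pdf_pos z).le) y)]
    exact Set.indicator_le_self' (fun z _ => (pdf_pos z).le) y
  · exact pdf_integrable
  · filter_upwards with y
    apply tendsto_const_nhds.congr'
    filter_upwards [eventually_ge_atTop y] with x hx
    simp [Set.indicator_of_mem, hx]

lemma cdf_tendsto_atBot : Tendsto stdNormalCdf atBot (𝓝 0) := by
  have h0 : (0:ℝ) = ∫ _y : ℝ, (0:ℝ) := by simp
  rw [h0]
  apply Tendsto.congr (fun x => (cdf_eq_indicator x).symm)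
  apply tendsto_integral_filter_of_dominated_convergence stdNormalPdf
  · filter_upwards with x
    exact (pdf_cont.stronglyMeasurable.indicator measurableSet_Iic).aestronglyMeasurable
  · filter_upwards with x
    filter_upwards with y
    rw [Real.norm_eq_abs, abs_of_nonneg (Set.indicator_nonneg (fun z _ => (pdf_pos z).le) y)]
    exact Set.indicator_le_self' (fun z _ => (pdf_pos z).le) y
  · exact pdf_integrable
  · filter_upwards with y
    apply tendsto_const_nhds.congr'
    filter_upwards [eventually_lt_atBot y] with x hx
    simp [Set.indicator_of_notMem, not_le.mpr hx]

lemma cdf_pos (x : ℝ) : 0 < stdNormalCdf x := by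
  unfold stdNormalCdf
  apply setIntegral_pos_iff_support_of_nonneg_ae ?_ pdf_integrable.integrableOn |>.2
  · have : Function.support stdNormalPdf = Set.univ := by
      ext y; simp [Function.mem_support, (pdf_pos y).ne']
    rw [this]
    simp [Real.volume_Iic]
  · filter_upwards with y using (pdf_pos y).le

lemma cdf_lt_one (x : ℝ) : stdNormalCdf x < 1 := by
  have h : stdNormalCdf x + ∫ y in Set.Ioi x, stdNormalPdf y = 1 := by
    rw [← pdf_integral]
    exact intervalIntegral.integral_Iic_add_Ioi pdf_integrable.integrableOn pdf_integrable.integrableOn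
  have hpos : 0 < ∫ y in Set.Ioi x, stdNormalPdf y := by
    apply setIntegral_pos_iff_support_of_nonneg_ae ?_ pdf_integrable.integrableOn |>.2
    · have : Function.support stdNormalPdf = Set.univ := by
        ext y; simp [Function.mem_support, (pdf_pos y).ne']
      rw [this]
      simp [Real.volume_Ioi]
    · filter_upwards with y using (pdf_pos y).le
  linarith

lemma cdf_surj {p : ℝ} (hp : p ∈ Set.Ioo (0:ℝ) 1) : ∃ x, stdNormalCdf x = p := by
  obtain ⟨a, ha⟩ := (cdf_tendsto_atBot.eventually_lt_const hp.1).exists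
  obtain ⟨b, hb⟩ := (cdf_tendsto_atTop.eventually_const_lt hp.2).exists
  have hab : a ≤ b := by
    by_contra h
    exact absurd (cdf_strictMono (not_le.mp h)) (by linarith)
  obtain ⟨x, _, hx⟩ := intermediate_value_Icc hab cdf_cont.continuousOn
    ⟨ha.le, hb.le⟩
  exact ⟨x, hx⟩

lemma cdf_inv_eq {p : ℝ} (hp : p ∈ Set.Ioo (0:ℝ) 1) : stdNormalCdf (stdNormalInv p) = p :=
  Function.invFun_eq (cdf_surj hp)

lemma inv_cdf_eq (x : ℝ) : stdNormalInv (stdNormalCdf x) = x :=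
  Function.leftInverse_invFun cdf_strictMono.injective x

section KeyIdentity
variable {a b : ℝ}

lemma exp_algebra (ha : 0 < a) (hb : 0 < b) (hab : a^2 + b^2 = 1) (c y : ℝ) :
    stdNormalPdf y * (stdNormalPdf ((c + a*y)/b) * b⁻¹)
      = stdNormalPdf c * (Real.exp (-(y+a*c)^2/(2*b^2)) * (b * Real.sqrt (2*Real.pi))⁻¹) := by
  unfold stdNormalPdf
  have hs : Real.sqrt (2*Real.pi) > 0 := by positivity
  have hexp : (-y^2/2) + (-((c+a*y)/b)^2/2) = (-c^2/2) + (-(y+a*c)^2/(2*b^2)) := by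
    have hb' : b ≠ 0 := hb.ne'
    field_simp
    linear_combination (c^2-y^2) * hab
  have h2 : Real.exp (-y^2/2) * Real.exp (-((c+a*y)/b)^2/2)
      = Real.exp (-c^2/2) * Real.exp (-(y+a*c)^2/(2*b^2)) := by
    rw [← Real.exp_add, ← Real.exp_add, hexp]
  calc Real.exp (-y^2/2) / Real.sqrt (2*Real.pi) *
        (Real.exp (-((c+a*y)/b)^2/2) / Real.sqrt (2*Real.pi) * b⁻¹)
      = (Real.exp (-y^2/2) * Real.exp (-((c+a*y)/b)^2/2)) *
        ((Real.sqrt (2*Real.pi))⁻¹ * (Real.sqrt (2*Real.pi))⁻¹ * b⁻¹) := by ring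
    _ = (Real.exp (-c^2/2) * Real.exp (-(y+a*c)^2/(2*b^2))) *
        ((Real.sqrt (2*Real.pi))⁻¹ * (Real.sqrt (2*Real.pi))⁻¹ * b⁻¹) := by rw [h2]
    _ = Real.exp (-c^2/2) / Real.sqrt (2*Real.pi) *
        (Real.exp (-(y+a*c)^2/(2*b^2)) * (b * Real.sqrt (2*Real.pi))⁻¹) := by ring

lemma gauss_shift (hb : 0 < b) (d : ℝ) :
    ∫ y : ℝ, Real.exp (-(y+d)^2/(2*b^2)) = b * Real.sqrt (2*Real.pi) := by
  have h1 : ∀ y : ℝ, Real.exp (-(y+d)^2/(2*b^2)) = Real.exp (-(1/(2*b^2)) * (y+d)^2) := by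
    intro y; congr 1; field_simp
  simp_rw [h1]
  rw [integral_add_right_eq_self (fun y => Real.exp (-(1/(2*b^2)) * y^2)) d]
  rw [integral_gaussian]
  rw [show Real.pi / (1/(2*b^2)) = (2*Real.pi) * b^2 by field_simp]
  rw [Real.sqrt_mul (by positivity), Real.sqrt_sq hb.le]
  ring

lemma deriv_integral_eq (ha : 0 < a) (hb : 0 < b) (hab : a^2 + b^2 = 1) (c : ℝ) :
    ∫ y : ℝ, stdNormalPdf y * (stdNormalPdf ((c + a*y)/b) * b⁻¹) = stdNormalPdf c := by
  simp_rw [exp_algebra ha hb hab c]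
  rw [integral_const_mul, integral_mul_const, gauss_shift hb]
  have hs : (0:ℝ) < b * Real.sqrt (2*Real.pi) := by positivity
  field_simp

lemma integrable_gauss_shift (hb : 0 < b) (d : ℝ) :
    Integrable (fun y : ℝ => Real.exp (-(y+d)^2/(2*b^2))) := by
  have h1 : ∀ y : ℝ, Real.exp (-(y+d)^2/(2*b^2)) = Real.exp (-(1/(2*b^2)) * (y+d)^2) := by
    intro y; congr 1; field_simp
  simp_rw [h1]
  exact (integrable_exp_neg_mul_sq (by positivity)).comp_add_right d

lemma key_identity (ha : 0 < a) (hb : 0 < b) (hab : a^2 + b^2 = 1) (c : ℝ) :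
    ∫ y : ℝ, stdNormalPdf y * stdNormalCdf ((c + a*y)/b) = stdNormalCdf c := by
  set H : ℝ → ℝ := fun c => ∫ y : ℝ, stdNormalPdf y * stdNormalCdf ((c + a*y)/b) with hH
  have cdf_mem : ∀ t : ℝ, |stdNormalCdf t| ≤ 1 := by
    intro t
    rw [abs_of_pos (cdf_pos t)]
    exact (cdf_lt_one t).le
  have meas : ∀ x : ℝ, AEStronglyMeasurable (fun y : ℝ => stdNormalPdf y * stdNormalCdf ((x + a*y)/b)) volume := by
    intro x
    exact (pdf_cont.mul (cdf_cont.comp (by fun_prop))).aestronglyMeasurable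
  have hInt : ∀ x : ℝ, Integrable (fun y : ℝ => stdNormalPdf y * stdNormalCdf ((x + a*y)/b)) := by
    intro x
    apply pdf_integrable.mono (meas x)
    filter_upwards with y
    rw [Real.norm_eq_abs, abs_mul, abs_of_pos (pdf_pos y), Real.norm_eq_abs,
      abs_of_pos (pdf_pos y)]
    exact mul_le_of_le_one_right (pdf_pos y).le (cdf_mem ((x + a*y)/b))
  have pdf_le : ∀ t : ℝ, stdNormalPdf t ≤ (Real.sqrt (2*Real.pi))⁻¹ := by
    intro t
    unfold stdNormalPdf
    rw [div_eq_mul_inv]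
    have h1 : Real.exp (-t^2/2) ≤ 1 := by
      rw [Real.exp_le_one_iff]; nlinarith [sq_nonneg t]
    have h2 : (0:ℝ) ≤ (Real.sqrt (2*Real.pi))⁻¹ := by positivity
    nlinarith
  have hDeriv : ∀ x : ℝ, HasDerivAt H (stdNormalPdf x) x := by
    intro x
    have key := hasDerivAt_integral_of_dominated_loc_of_deriv_le (F := fun c y => stdNormalPdf y * stdNormalCdf ((c + a*y)/b))
      (F' := fun c y => stdNormalPdf y * (stdNormalPdf ((c + a*y)/b) * b⁻¹))
      (bound := fun y => stdNormalPdf y * ((Real.sqrt (2*Real.pi))⁻¹ * b⁻¹))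
      (x₀ := x) (s := Metric.ball x 1) (Metric.ball_mem_nhds x one_pos)
      (Filter.Eventually.of_forall meas) (hInt x)
      ((pdf_cont.mul ((pdf_cont.comp (by fun_prop : Continuous fun y : ℝ => (x + a*y)/b)).mul continuous_const)).aestronglyMeasurable)
      ?_ (pdf_integrable.mul_const _) ?_
    · rw [deriv_integral_eq ha hb hab x] at key
      exact key.2
    · filter_upwards with y
      intro c _
      rw [Real.norm_eq_abs, abs_mul, abs_of_pos (pdf_pos y), abs_mul,
        abs_of_pos (pdf_pos ((c + a*y)/b)), abs_of_pos (by positivity : (0:ℝ) < b⁻¹)]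
      exact mul_le_mul_of_nonneg_left
        (mul_le_mul_of_nonneg_right (pdf_le _) (by positivity)) (pdf_pos y).le
    · filter_upwards with y
      intro c _
      have h1 : HasDerivAt (fun c : ℝ => (c + a*y)/b) b⁻¹ c := by
        simpa [div_eq_mul_inv] using ((hasDerivAt_id c).add_const (a*y)).div_const b
      have h2 : HasDerivAt (fun c : ℝ => stdNormalCdf ((c + a*y)/b))
          (stdNormalPdf ((c + a*y)/b) * b⁻¹) c :=
        by have := (cdf_hasDerivAt ((c + a*y)/b)).comp c h1; exact this
      exact h2.const_mul (stdNormalPdf y)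
  -- H - Φ is constant
  have hconst : ∀ x : ℝ, H x - stdNormalCdf x = H 0 - stdNormalCdf 0 := by
    intro x
    apply is_const_of_deriv_eq_zero (f := fun x => H x - stdNormalCdf x)
    · intro z
      exact ((hDeriv z).sub (cdf_hasDerivAt z)).differentiableAt
    · intro z
      rw [show (fun x => H x - stdNormalCdf x) = H - stdNormalCdf from rfl, ((hDeriv z).sub (cdf_hasDerivAt z)).deriv]
      ring
  -- limit at -infty
  have hHbot : Tendsto H atBot (𝓝 0) := by
    have h0 : (0:ℝ) = ∫ _y : ℝ, (0:ℝ) := by simp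
    rw [h0]
    apply tendsto_integral_filter_of_dominated_convergence stdNormalPdf
    · exact Filter.Eventually.of_forall meas
    · filter_upwards with x
      filter_upwards with y
      rw [Real.norm_eq_abs, abs_mul, abs_of_pos (pdf_pos y)]
      exact mul_le_of_le_one_right (pdf_pos y).le (cdf_mem ((x + a*y)/b))
    · exact pdf_integrable
    · filter_upwards with y
      have harg : Tendsto (fun x : ℝ => (x + a*y)/b) atBot atBot := by
        apply Tendsto.atBot_div_const hb
        exact tendsto_atBot_add_const_right _ _ tendsto_id
      have := (cdf_tendsto_atBot.comp harg).const_mul (stdNormalPdf y)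
      simpa using this
  have hPhibot : Tendsto (fun x => H x - stdNormalCdf x) atBot (𝓝 0) := by
    have := hHbot.sub cdf_tendsto_atBot
    simpa using this
  have hzero : H 0 - stdNormalCdf 0 = 0 := by
    have : Tendsto (fun _ : ℝ => H 0 - stdNormalCdf 0) atBot (𝓝 (H 0 - stdNormalCdf 0)) :=
      tendsto_const_nhds
    apply tendsto_nhds_unique ?_ hPhibot
    exact this.congr fun x => (hconst x).symm
  have := hconst c
  rw [hzero] at this
  linarith
end KeyIdentity

section G
variable {a b : ℝ} {n : ℕ}

noncomputable def gfun (a b : ℝ) (n : ℕ) (c : ℝ) : ℝ :=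
  ∫ y : ℝ, stdNormalPdf y * (1 - stdNormalCdf ((c + a*y)/b))^n

lemma fac_mem (t : ℝ) : (1 - stdNormalCdf t)^n ∈ Set.Icc (0:ℝ) 1 := by
  constructor
  · exact pow_nonneg (by nlinarith [cdf_lt_one t]) n
  · exact pow_le_one₀ (by nlinarith [cdf_lt_one t]) (by nlinarith [cdf_pos t])

lemma g_meas (c : ℝ) :
    AEStronglyMeasurable (fun y : ℝ => stdNormalPdf y * (1 - stdNormalCdf ((c + a*y)/b))^n) volume :=
  (pdf_cont.mul (((continuous_const.sub (cdf_cont.comp (by fun_prop))).pow n))).aestronglyMeasurable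

lemma g_integrable (c : ℝ) :
    Integrable (fun y : ℝ => stdNormalPdf y * (1 - stdNormalCdf ((c + a*y)/b))^n) := by
  apply pdf_integrable.mono (g_meas c)
  filter_upwards with y
  rw [Real.norm_eq_abs, Real.norm_eq_abs, abs_mul, abs_of_pos (pdf_pos y),
    abs_of_nonneg (fac_mem _).1]
  exact mul_le_of_le_one_right (pdf_pos y).le (fac_mem _).2

lemma g_cont : Continuous (gfun a b n) := by
  rw [continuous_iff_continuousAt]
  intro c
  apply continuousAt_of_dominated (bound := stdNormalPdf)
  · exact Filter.Eventually.of_forall fun x => g_meas x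
  · filter_upwards with x
    filter_upwards with y
    rw [Real.norm_eq_abs, abs_mul, abs_of_pos (pdf_pos y), abs_of_nonneg (fac_mem _).1]
    exact mul_le_of_le_one_right (pdf_pos y).le (fac_mem _).2
  · exact pdf_integrable
  · filter_upwards with y
    exact ((continuous_const.mul ((continuous_const.sub
      (cdf_cont.comp (by fun_prop))).pow n)).continuousAt)

lemma g_anti (ha : 0 < a) (hb : 0 < b) (hn : 1 ≤ n) : StrictAnti (gfun a b n) := by
  intro c c' hcc
  have hpt : ∀ y : ℝ, stdNormalPdf y * (1 - stdNormalCdf ((c' + a*y)/b))^n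
      < stdNormalPdf y * (1 - stdNormalCdf ((c + a*y)/b))^n := by
    intro y
    apply mul_lt_mul_of_pos_left ?_ (pdf_pos y)
    apply pow_lt_pow_left₀ ?_ (by nlinarith [cdf_lt_one ((c' + a*y)/b)]) (by omega)
    have : stdNormalCdf ((c + a*y)/b) < stdNormalCdf ((c' + a*y)/b) := by
      apply cdf_strictMono
      apply div_lt_div_of_pos_right ?_ hb
      linarith
    linarith
  have hpos : 0 < ∫ y : ℝ, (stdNormalPdf y * (1 - stdNormalCdf ((c + a*y)/b))^n
      - stdNormalPdf y * (1 - stdNormalCdf ((c' + a*y)/b))^n) := by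
    rw [integral_pos_iff_support_of_nonneg_ae]
    · have hsupp : Function.support (fun y : ℝ => stdNormalPdf y * (1 - stdNormalCdf ((c + a*y)/b))^n
          - stdNormalPdf y * (1 - stdNormalCdf ((c' + a*y)/b))^n) = Set.univ := by
        ext y
        simp only [Function.mem_support, Set.mem_univ, iff_true]
        exact sub_ne_zero.2 (hpt y).ne'
      rw [hsupp]
      simp [Real.volume_univ]
    · filter_upwards with y
      exact sub_nonneg.2 (hpt y).le
    · exact (g_integrable c).sub (g_integrable c')
  rw [integral_sub (g_integrable c) (g_integrable c')] at hpos
  unfold gfun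
  linarith

lemma g_atBot (hb : 0 < b) : Tendsto (gfun a b (n := n)) atBot (𝓝 1) := by
  rw [← pdf_integral]
  apply tendsto_integral_filter_of_dominated_convergence stdNormalPdf
  · exact Filter.Eventually.of_forall fun x => g_meas x
  · filter_upwards with x
    filter_upwards with y
    rw [Real.norm_eq_abs, abs_mul, abs_of_pos (pdf_pos y), abs_of_nonneg (fac_mem _).1]
    exact mul_le_of_le_one_right (pdf_pos y).le (fac_mem _).2
  · exact pdf_integrable
  · filter_upwards with y
    have harg : Tendsto (fun c : ℝ => (c + a*y)/b) atBot atBot :=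
      Tendsto.atBot_div_const hb (tendsto_atBot_add_const_right _ (a*y) tendsto_id)
    have h1 : Tendsto (fun c : ℝ => stdNormalCdf ((c+a*y)/b)) atBot (𝓝 0) :=
      cdf_tendsto_atBot.comp harg
    have h2 := (((tendsto_const_nhds : Tendsto (fun _ : ℝ => (1:ℝ)) atBot (𝓝 1)).sub h1).pow n).const_mul (stdNormalPdf y)
    simpa using h2

lemma g_atTop (hb : 0 < b) (hn : 1 ≤ n) : Tendsto (gfun a b (n := n)) atTop (𝓝 0) := by
  rw [show (0:ℝ) = ∫ _y : ℝ, (0:ℝ) by simp]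
  apply tendsto_integral_filter_of_dominated_convergence stdNormalPdf
  · exact Filter.Eventually.of_forall fun x => g_meas x
  · filter_upwards with x
    filter_upwards with y
    rw [Real.norm_eq_abs, abs_mul, abs_of_pos (pdf_pos y), abs_of_nonneg (fac_mem _).1]
    exact mul_le_of_le_one_right (pdf_pos y).le (fac_mem _).2
  · exact pdf_integrable
  · filter_upwards with y
    have harg : Tendsto (fun c : ℝ => (c + a*y)/b) atTop atTop :=
      Tendsto.atTop_div_const hb (tendsto_atTop_add_const_right _ (a*y) tendsto_id)
    have h1 : Tendsto (fun c : ℝ => stdNormalCdf ((c+a*y)/b)) atTop (𝓝 1) :=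
      cdf_tendsto_atTop.comp harg
    have h2 := (((tendsto_const_nhds : Tendsto (fun _ : ℝ => (1:ℝ)) atTop (𝓝 1)).sub h1).pow n).const_mul (stdNormalPdf y)
    simpa [zero_pow (by omega : n ≠ 0)] using h2
end G

section Jensen
variable {a b : ℝ}

lemma integrable_pdf_mul {h : ℝ → ℝ} (hm : AEStronglyMeasurable h volume)
    (hbd : ∀ y, |h y| ≤ 1) : Integrable (fun y => stdNormalPdf y * h y) := by
  apply pdf_integrable.mono (pdf_cont.aestronglyMeasurable.mul hm)
  filter_upwards with y
  simp only [Pi.mul_apply]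
  rw [Real.norm_eq_abs, Real.norm_eq_abs, abs_mul, abs_of_pos (pdf_pos y)]
  exact mul_le_of_le_one_right (pdf_pos y).le (hbd y)

lemma mean_identity (ha : 0 < a) (hb : 0 < b) (hab : a^2 + b^2 = 1) (c : ℝ) :
    ∫ y : ℝ, stdNormalPdf y * (1 - stdNormalCdf ((c + a*y)/b)) = 1 - stdNormalCdf c := by
  have h1 : ∀ y : ℝ, stdNormalPdf y * (1 - stdNormalCdf ((c + a*y)/b))
      = stdNormalPdf y - stdNormalPdf y * stdNormalCdf ((c + a*y)/b) := by
    intro y; ring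
  simp_rw [h1]
  have hint : Integrable (fun y : ℝ => stdNormalPdf y * stdNormalCdf ((c + a*y)/b)) :=
    integrable_pdf_mul ((cdf_cont.comp (by fun_prop : Continuous fun y : ℝ => (c + a*y)/b)).aestronglyMeasurable)
      (fun y => by rw [abs_of_pos (cdf_pos _)]; exact (cdf_lt_one _).le)
  rw [integral_sub pdf_integrable hint, pdf_integral, key_identity ha hb hab]

lemma jensen_pow (ha : 0 < a) (hb : 0 < b) (hab : a^2 + b^2 = 1) (n : ℕ) (c : ℝ) :
    (1 - stdNormalCdf c)^n ≤ gfun a b n c := by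
  set μ := volume.withDensity (fun y => ENNReal.ofReal (stdNormalPdf y)) with hμ
  have hμ' : μ = volume.withDensity (fun y => ((stdNormalPdf y).toNNReal : ℝ≥0∞)) := rfl
  have hdm : Measurable fun y : ℝ => (stdNormalPdf y).toNNReal :=
    measurable_real_toNNReal.comp pdf_cont.measurable
  have hconv : ∀ g : ℝ → ℝ, (∫ y, g y ∂μ) = ∫ y, stdNormalPdf y * g y := by
    intro g
    rw [hμ', integral_withDensity_eq_integral_smul hdm]
    congr 1; funext y
    simp [NNReal.smul_def, Real.coe_toNNReal _ (pdf_pos y).le]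
  have hprob : IsProbabilityMeasure μ := by
    constructor
    rw [hμ, withDensity_apply _ MeasurableSet.univ, Measure.restrict_univ,
      ← ofReal_integral_eq_lintegral_ofReal pdf_integrable
        (Filter.Eventually.of_forall fun y => (pdf_pos y).le), pdf_integral]
    simp
  set f : ℝ → ℝ := fun y => 1 - stdNormalCdf ((c + a*y)/b) with hf
  have hfc : Continuous f := continuous_const.sub (cdf_cont.comp (by fun_prop))
  have hfbd : ∀ y, ‖f y‖ ≤ 1 := by
    intro y
    simp only [hf]
    rw [Real.norm_eq_abs, abs_of_nonneg (by nlinarith [cdf_lt_one ((c + a*y)/b)])]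
    nlinarith [cdf_pos ((c + a*y)/b)]
  have hfi : Integrable f μ :=
    (integrable_const (1:ℝ)).mono' (hfc.aestronglyMeasurable)
      (Filter.Eventually.of_forall hfbd)
  have hgi : Integrable ((fun x : ℝ => x ^ n) ∘ f) μ := by
    apply (integrable_const (1:ℝ)).mono' ((hfc.pow n).aestronglyMeasurable)
    filter_upwards with y
    show ‖f y ^ n‖ ≤ 1
    simp only [hf]
    rw [Real.norm_eq_abs, abs_of_nonneg (fac_mem _).1]
    exact (fac_mem _).2
  have key := (convexOn_pow (𝕜 := ℝ) n).map_integral_le (μ := μ)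
    (continuous_pow n).continuousOn isClosed_Ici
    (Filter.Eventually.of_forall (fun y => by
      simp only [hf, Set.mem_Ici]
      nlinarith [cdf_lt_one ((c + a*y)/b)])) hfi hgi
  rw [hconv f, hconv (fun y => f y ^ n)] at key
  rw [mean_identity ha hb hab c] at key
  exact key
end Jensen

theorem vasicek_zero_default_unique_solution (ρ : ℝ) (hρ : ρ ∈ Set.Ioo (0:ℝ) 1)
    (n : ℕ) (hn : 1 ≤ n) (v : ℝ) (hv : v ∈ Set.Ioo (0:ℝ) 1) :
    (∃! p : ℝ, p ∈ Set.Ioo (0:ℝ) 1 ∧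
        v = ∫ y : ℝ, stdNormalPdf y * (1 - vasicekF ρ p y) ^ n)
    ∧ ∀ p ∈ Set.Ioo (0:ℝ) 1,
        v = (∫ y : ℝ, stdNormalPdf y * (1 - vasicekF ρ p y) ^ n) →
        1 - v ^ ((1:ℝ)/n) ≤ p := by
  obtain ⟨hρ0, hρ1⟩ := hρ
  set a := Real.sqrt ρ with hadef
  set b := Real.sqrt (1-ρ) with hbdef
  have ha : 0 < a := Real.sqrt_pos.2 hρ0
  have hb : 0 < b := Real.sqrt_pos.2 (by linarith)
  have hab : a^2 + b^2 = 1 := by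
    rw [hadef, hbdef, Real.sq_sqrt hρ0.le, Real.sq_sqrt (by linarith)]; ring
  have hveq : ∀ p : ℝ, (∫ y : ℝ, stdNormalPdf y * (1 - vasicekF ρ p y)^n)
      = gfun a b n (stdNormalInv p) := by
    intro p; rfl
  have hanti := g_anti ha hb hn (a := a) (b := b)
  constructor
  · -- existence and uniqueness
    obtain ⟨A, hA⟩ := ((g_atBot hb (n := n) (a := a)).eventually_const_lt hv.2).exists
    obtain ⟨B, hB⟩ := ((g_atTop hb hn (a := a)).eventually_lt_const hv.1).exists
    have hAB : A ≤ B := by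
      by_contra h
      have := hanti (not_le.1 h)
      linarith
    obtain ⟨c, _, hc⟩ := intermediate_value_Icc' hAB (g_cont (a := a) (b := b) (n := n)).continuousOn
      ⟨hB.le, hA.le⟩
    refine ⟨stdNormalCdf c, ⟨⟨cdf_pos c, cdf_lt_one c⟩, ?_⟩, ?_⟩
    · rw [hveq, inv_cdf_eq, hc]
    · rintro p' ⟨hp', heq'⟩
      rw [hveq] at heq'
      have : stdNormalInv p' = c := by
        apply hanti.injective
        rw [hc, ← heq']
      rw [← cdf_inv_eq hp', this]
  · -- bound
    intro p hp heq
    have hjen := jensen_pow ha hb hab n (stdNormalInv p)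
    rw [cdf_inv_eq hp, ← hveq, ← heq] at hjen
    have h1p : (0:ℝ) ≤ 1 - p := by linarith [hp.2]
    have hnn : (n:ℝ) ≠ 0 := by positivity
    have heq2 : (1 - p) = ((1-p)^n : ℝ) ^ ((1:ℝ)/n) := by
      rw [← Real.rpow_natCast (1-p) n, ← Real.rpow_mul h1p, mul_one_div, div_self hnn,
        Real.rpow_one]
    have hle : ((1-p)^n : ℝ) ^ ((1:ℝ)/n) ≤ v ^ ((1:ℝ)/n) :=
      Real.rpow_le_rpow (pow_nonneg h1p n) hjen (by positivity)
    rw [← heq2] at hle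
    linarith
end

section
/- Let p_A ≤ p_B ≤ p_C be default probabilities of three rating grades. Then p_A ≤ max over the constraint set of p_A equals the value obtained at p_A = p_B = p_C; formally: sup { q_A : (q_A,q_B,q_C) with q_A ≤ q_B ≤ q_C, all in [0,1], satisfying (1-q_A)^{n_A}(1-q_B)^{n_B}(1-q_C)^{n_C} ≥ 1-γ } = 1 - (1-γ)^{1/(n_A+n_B+n_C)} for positive integers n_A, n_B, n_C and γ ∈ (0,1). -/
theorem most_prudent_estimate_sup (nA nB nC : ℕ) (hA : 0 < nA) (hB : 0 < nB) (hC : 0 < nC)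
    (γ : ℝ) (hγ : γ ∈ Set.Ioo (0:ℝ) 1) :
    sSup {qA : ℝ | ∃ qB qC : ℝ, 0 ≤ qA ∧ qA ≤ qB ∧ qB ≤ qC ∧ qC ≤ 1 ∧
        (1 - qA) ^ nA * (1 - qB) ^ nB * (1 - qC) ^ nC ≥ 1 - γ}
      = 1 - (1 - γ) ^ ((1:ℝ) / (nA + nB + nC)) := by
  obtain ⟨hγ0, hγ1⟩ := hγ
  set N : ℕ := nA + nB + nC with hN
  have hNpos : 0 < N := by omega
  have hNR : ((nA : ℝ) + nB + nC) = (N : ℝ) := by push_cast [hN]; ring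
  have h1γ0 : (0:ℝ) < 1 - γ := by linarith
  have h1γ1 : (1:ℝ) - γ < 1 := by linarith
  set r : ℝ := (1 - γ) ^ ((1:ℝ) / (N : ℝ)) with hr
  have hr0 : 0 < r := Real.rpow_pos_of_pos h1γ0 _
  have hr1 : r ≤ 1 := by
    apply Real.rpow_le_one (le_of_lt h1γ0) (le_of_lt h1γ1)
    positivity
  have hrN : r ^ N = 1 - γ := by
    rw [hr, ← Real.rpow_natCast ((1 - γ) ^ ((1:ℝ)/(N:ℝ))) N, ← Real.rpow_mul (le_of_lt h1γ0)]
    rw [one_div, inv_mul_cancel₀ (by exact_mod_cast hNpos.ne')]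
    exact Real.rpow_one _
  rw [hNR]
  apply le_antisymm
  · apply csSup_le
    · exact ⟨1 - r, 1 - r, 1 - r, by linarith, le_refl _, le_refl _, by linarith, by
        have h : (1 : ℝ) - (1 - r) = r := by ring
        rw [h, ← pow_add, ← pow_add]
        exact hrN.ge⟩
    · rintro qA ⟨qB, qC, hqA0, hAB, hBC, hC1, hprod⟩
      have h1C : (0:ℝ) ≤ 1 - qC := by linarith
      have h1B : (0:ℝ) ≤ 1 - qB := by linarith
      have h1A : (0:ℝ) ≤ 1 - qA := by linarith
      have hle : (1 - γ) ≤ (1 - qA) ^ N := by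
        calc (1 - γ) ≤ (1 - qA) ^ nA * (1 - qB) ^ nB * (1 - qC) ^ nC := hprod
          _ ≤ (1 - qA) ^ nA * (1 - qA) ^ nB * (1 - qA) ^ nC := by
              apply mul_le_mul
              apply mul_le_mul le_rfl (pow_le_pow_left₀ h1B (by linarith) _)
                (by positivity) (by positivity)
              exact pow_le_pow_left₀ h1C (by linarith) _
              positivity
              positivity
          _ = (1 - qA) ^ N := by rw [← pow_add, ← pow_add, hN]
      have : r ≤ 1 - qA := by
        by_contra h
        push_neg at h
        have := pow_lt_pow_left₀ h h1A hNpos.ne'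
        rw [hrN] at this
        linarith
      linarith
  · apply le_csSup
    · refine ⟨1, ?_⟩
      rintro qA ⟨qB, qC, hqA0, hAB, hBC, hC1, hprod⟩
      linarith
    · exact ⟨1 - r, 1 - r, by linarith, le_refl _, le_refl _, by linarith, by
        have h : (1 : ℝ) - (1 - r) = r := by ring
        rw [h, ← pow_add, ← pow_add]
        exact hrN.ge⟩
end
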